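/- arXiv:2507.04521 — 2 statements merged into one kernel-verified Lean document; each statement's English description precedes it below -/
import Mathlib

section
/- For any α ∈ [0,1] and any n ≥ 1 for which the n-th step of Shulga's algorithm applied to α is defined, the Shulga sequences satisfy c_n ≥ b_n. -/
noncomputable section

namespace ShulgaPaper

open Filter Topology

/-- The value of the finite continued fraction `[0; a₁, …, aₙ]`
(the empty continued fraction has value `0`). -/
def cf : List ℕ → ℝ
  | [] => 0
  | a :: l => 1 / ((a : ℝ) + cf l)

/-- Iterates of the Gauss map, starting from the fractional part of `x`. -/
def gaussIter (x : ℝ) : ℕ → ℝ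
  | 0 => Int.fract x
  | n + 1 => Int.fract (1 / gaussIter x n)

/-- The `n`-th partial quotient `aₙ(x)` of the continued fraction expansion of `x`
(for `n ≥ 1`; a junk value is returned if it is undefined). -/
def pq (x : ℝ) (n : ℕ) : ℕ := ⌊1 / gaussIter x (n - 1)⌋₊

/-- The `n`-th partial quotient `aₙ(x)` of `x` is defined (`n ≥ 1`), i.e. `n` does not
exceed the length of the continued fraction expansion of `x`. -/
def pqDefined (x : ℝ) (n : ℕ) : Prop := gaussIter x (n - 1) ≠ 0

/-- The set `G` of real numbers that are rational or whose partial quotients diverge. -/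
def G : Set ℝ :=
  {x | (∃ q : ℚ, x = (q : ℝ)) ∨ Tendsto (fun n => pq x n) atTop atTop}

/-- The list of pairs `(b_k, c_k)`, `k = 1, …, n`, produced by (a totalized version of)
Shulga's algorithm applied to `α`. -/
def shulgaList (α : ℝ) : ℕ → List (ℕ × ℕ)
  | 0 => []
  | n + 1 =>
      let L := shulgaList α n
      let b := pq (α - cf (L.map Prod.snd)) (n + 1) + 1
      let c := pq (α - cf (L.map Prod.fst ++ [b])) (n + 1)
      L ++ [(b, c)]

/-- The list `[b₁, …, bₙ]` of Shulga's algorithm applied to `α`. -/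
def bList (α : ℝ) (n : ℕ) : List ℕ := (shulgaList α n).map Prod.fst

/-- The list `[c₁, …, cₙ]` of Shulga's algorithm applied to `α`. -/
def cList (α : ℝ) (n : ℕ) : List ℕ := (shulgaList α n).map Prod.snd

/-- `bₙ` of Shulga's algorithm applied to `α` (for `n ≥ 1`). -/
def shulgaB (α : ℝ) (n : ℕ) : ℕ := ((shulgaList α n).getLast?.getD (0, 0)).1

/-- `cₙ` of Shulga's algorithm applied to `α` (for `n ≥ 1`). -/
def shulgaC (α : ℝ) (n : ℕ) : ℕ := ((shulgaList α n).getLast?.getD (0, 0)).2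

/-- The first `n` steps of Shulga's algorithm applied to `α` are defined: for each step
`k + 1 ≤ n`, the partial quotients `a_{k+1}(α - [0;c₁,…,c_k])` and
`a_{k+1}(α - [0;b₁,…,b_{k+1}])` defining `b_{k+1}` and `c_{k+1}` exist
(in particular the algorithm has not stopped before step `n`). -/
def shulgaDefined (α : ℝ) (n : ℕ) : Prop :=
  ∀ k < n, pqDefined (α - cf (cList α k)) (k + 1) ∧
    pqDefined (α - cf (bList α (k + 1))) (k + 1)

/-- The half-open interval whose included endpoint is `x` and excluded endpoint is `y`,
the smaller one being the left endpoint. -/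
def hIco (x y : ℝ) : Set ℝ := if x ≤ y then Set.Ico x y else Set.Ioc y x

/-- The list `[a 1, …, a n]`. -/
def listOf (a : ℕ → ℕ) (n : ℕ) : List ℕ := (List.range n).map fun i => a (i + 1)

/-- The interval `B_k` determined by the digits `b`, `c` (`k ≥ 1`). -/
def Bset (b c : ℕ → ℕ) (k : ℕ) : Set ℝ :=
  hIco (cf (listOf b (k - 1) ++ [b k - 1]) + cf (listOf c (k - 1)))
    (cf (listOf b k) + cf (listOf c (k - 1)))

/-- The interval `C_k` determined by the digits `b`, `c` (`k ≥ 1`). -/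
def Cset (b c : ℕ → ℕ) (k : ℕ) : Set ℝ :=
  hIco (cf (listOf c k) + cf (listOf b k))
    (cf (listOf c (k - 1) ++ [c k + 1]) + cf (listOf b k))

/-- `A₀ = [0,1]` and `Aₙ = ⋂_{k=1}^{n} (B_k ∩ C_k)` for `n ≥ 1`. -/
def Aset (b c : ℕ → ℕ) : ℕ → Set ℝ
  | 0 => Set.Icc 0 1
  | n + 1 => ⋂ k ∈ Finset.Icc 1 (n + 1), (Bset b c k ∩ Cset b c k)

/-- The denominators of the convergents of `[0; a 1, a 2, …]`:
`q₀ = 1`, `q₁ = a 1`, `q_k = a k * q_{k-1} + q_{k-2}`. -/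
def qden (a : ℕ → ℕ) : ℕ → ℕ
  | 0 => 1
  | 1 => a 1
  | n + 2 => a (n + 2) * qden a (n + 1) + qden a n

/-! ### Auxiliary development for `stmt3` -/

/-- Continued fraction value with a real tail: `cfR [a₁,…,aₙ] t = [0; a₁, …, aₙ + t]`. -/
def cfR : List ℕ → ℝ → ℝ
  | [], t => t
  | a :: l, t => 1 / ((a : ℝ) + cfR l t)

/-- `(pₙ, pₙ₋₁, qₙ, qₙ₋₁)` for the list `[a₁,…,aₙ]`. -/
def cnum : List ℕ → ℕ × ℕ × ℕ × ℕ
  | [] => (0, 1, 1, 0)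
  | a :: l => ((cnum l).2.2.1, (cnum l).2.2.2,
      a * (cnum l).2.2.1 + (cnum l).1, a * (cnum l).2.2.2 + (cnum l).2.1)

def nA (l : List ℕ) : ℕ := (cnum l).1
def nB (l : List ℕ) : ℕ := (cnum l).2.1
def nC (l : List ℕ) : ℕ := (cnum l).2.2.1
def nD (l : List ℕ) : ℕ := (cnum l).2.2.2

@[simp] lemma nA_nil : nA [] = 0 := rfl
@[simp] lemma nB_nil : nB [] = 1 := rfl
@[simp] lemma nC_nil : nC [] = 1 := rfl
@[simp] lemma nD_nil : nD [] = 0 := rfl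
@[simp] lemma nA_cons (a : ℕ) (l : List ℕ) : nA (a :: l) = nC l := rfl
@[simp] lemma nB_cons (a : ℕ) (l : List ℕ) : nB (a :: l) = nD l := rfl
@[simp] lemma nC_cons (a : ℕ) (l : List ℕ) : nC (a :: l) = a * nC l + nA l := rfl
@[simp] lemma nD_cons (a : ℕ) (l : List ℕ) : nD (a :: l) = a * nD l + nB l := rfl

lemma cnum_concat (l : List ℕ) (d : ℕ) :
    nA (l ++ [d]) = d * nA l + nB l ∧ nB (l ++ [d]) = nA l ∧
    nC (l ++ [d]) = d * nC l + nD l ∧ nD (l ++ [d]) = nC l := by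
  induction l with
  | nil => simp
  | cons a l ih =>
    obtain ⟨i1, i2, i3, i4⟩ := ih
    simp only [List.cons_append, nA_cons, nB_cons, nC_cons, nD_cons, i1, i2, i3, i4]
    exact ⟨trivial, trivial, by ring, trivial⟩

lemma cnum_bounds (l : List ℕ) (h : ∀ a ∈ l, 1 ≤ a) :
    1 ≤ nC l ∧ nD l ≤ nC l ∧ nA l ≤ nC l ∧ nD l + nB l ≤ nC l + nA l ∧ nB l ≤ nC l := by
  induction l with
  | nil => simp
  | cons a l ih =>
    have ha : 1 ≤ a := h a (by simp)
    obtain ⟨h1, h2, h3, h4, h5⟩ := ih fun x hx => h x (by simp [hx])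
    have haC : nC l ≤ a * nC l := Nat.le_mul_of_pos_left _ ha
    have haD : nD l ≤ a * nD l := Nat.le_mul_of_pos_left _ ha
    have hyx : a * nD l ≤ a * nC l := Nat.mul_le_mul_left a h2
    have h6 : a * (nC l - nD l) + a * nD l = a * nC l := by
      rw [← Nat.mul_add, Nat.sub_add_cancel h2]
    have h7 : nC l - nD l ≤ a * (nC l - nD l) := Nat.le_mul_of_pos_left _ ha
    simp only [nA_cons, nB_cons, nC_cons, nD_cons]
    omega

lemma cnum_det (l : List ℕ) :
    (nA l : ℝ) * nD l - nB l * nC l = -(-1 : ℝ) ^ l.length := by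
  induction l with
  | nil => simp
  | cons a l ih =>
    simp only [nA_cons, nB_cons, nC_cons, nD_cons, List.length_cons, pow_succ]
    push_cast
    nlinarith [ih]

lemma cnum_mono {l m : List ℕ} (h : List.Forall₂ (· ≤ ·) l m) :
    nA l ≤ nA m ∧ nB l ≤ nB m ∧ nC l ≤ nC m ∧ nD l ≤ nD m := by
  induction h with
  | nil => simp
  | @cons a b l m hab _ ih =>
    simp only [nA_cons, nB_cons, nC_cons, nD_cons]
    obtain ⟨iA, iB, iC, iD⟩ := ih
    exact ⟨iC, iD, Nat.add_le_add (Nat.mul_le_mul hab iC) iA,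
      Nat.add_le_add (Nat.mul_le_mul hab iD) iB⟩

lemma cfR_nonneg (l : List ℕ) {t : ℝ} (ht : 0 ≤ t) : 0 ≤ cfR l t := by
  induction l with
  | nil => exact ht
  | cons a l ih =>
    exact div_nonneg zero_le_one (add_nonneg (Nat.cast_nonneg a) ih)

lemma nC_pos (l : List ℕ) (h : ∀ a ∈ l, 1 ≤ a) : (0 : ℝ) < nC l := by
  exact_mod_cast Nat.lt_of_lt_of_le Nat.zero_lt_one (cnum_bounds l h).1

lemma cfR_denom_pos (l : List ℕ) (h : ∀ a ∈ l, 1 ≤ a) {t : ℝ} (ht : 0 ≤ t) :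
    (0 : ℝ) < (nC l : ℝ) + (nD l : ℝ) * t := by
  have := nC_pos l h
  have : (0:ℝ) ≤ (nD l : ℝ) * t := mul_nonneg (Nat.cast_nonneg _) ht
  nlinarith [nC_pos l h]

lemma cfR_eq (l : List ℕ) (h : ∀ a ∈ l, 1 ≤ a) {t : ℝ} (ht : 0 ≤ t) :
    cfR l t = ((nA l : ℝ) + (nB l : ℝ) * t) / ((nC l : ℝ) + (nD l : ℝ) * t) := by
  induction l with
  | nil => simp [cfR]
  | cons a l ih =>
    have hl : ∀ x ∈ l, 1 ≤ x := fun x hx => h x (by simp [hx])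
    have hpos := cfR_denom_pos l hl ht
    have ihl := ih hl
    show 1 / ((a : ℝ) + cfR l t) = _
    rw [ihl]
    have hnum : (0:ℝ) ≤ (nA l : ℝ) + (nB l : ℝ) * t := by positivity
    have hden2 : (0:ℝ) < (a : ℝ) + ((nA l : ℝ) + (nB l : ℝ) * t) / ((nC l : ℝ) + (nD l : ℝ) * t) := by
      have ha : (1:ℝ) ≤ (a : ℝ) := by exact_mod_cast h a (by simp)
      have := div_nonneg hnum hpos.le
      linarith
    have hconsden : (0:ℝ) < ((a:ℝ) * nC l + nA l) + ((a:ℝ) * nD l + nB l) * t := by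
      have ha : (1:ℝ) ≤ (a : ℝ) := by exact_mod_cast h a (by simp)
      nlinarith [hpos, hnum]
    simp only [nA_cons, nB_cons, nC_cons, nD_cons]
    push_cast
    rw [div_eq_div_iff (ne_of_gt hden2) (ne_of_gt hconsden)]
    field_simp
    ring

lemma cf_eq_cfR (l : List ℕ) : cf l = cfR l 0 := by
  induction l with
  | nil => simp [cf, cfR]
  | cons a l ih => simp only [cf, cfR, ih]

lemma cf_eq (l : List ℕ) (h : ∀ a ∈ l, 1 ≤ a) : cf l = (nA l : ℝ) / (nC l : ℝ) := by
  rw [cf_eq_cfR, cfR_eq l h le_rfl]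
  simp

lemma cfR_sub_cf (l : List ℕ) (h : ∀ a ∈ l, 1 ≤ a) {t : ℝ} (ht : 0 ≤ t) :
    cfR l t = cf l + (-1 : ℝ) ^ l.length * t / ((nC l : ℝ) * ((nC l : ℝ) + (nD l : ℝ) * t)) := by
  rw [cf_eq l h, cfR_eq l h ht]
  have h1 := nC_pos l h
  have h2 := cfR_denom_pos l h ht
  have hdet := cnum_det l
  field_simp
  linear_combination (-t) * hdet

/-- `gaussIter` shifted by one step. -/
lemma gaussIter_succ' (x : ℝ) (n : ℕ) :
    gaussIter x (n + 1) = gaussIter (Int.fract (1 / Int.fract x)) n := by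
  induction n with
  | zero =>
    show Int.fract (1 / gaussIter x 0) = Int.fract (Int.fract (1 / Int.fract x))
    rw [Int.fract_fract]
    rfl
  | succ n ih =>
    show Int.fract (1 / gaussIter x (n + 1)) = Int.fract (1 / gaussIter _ n)
    rw [ih]

lemma cfR_mem_Ico (l : List ℕ) (h : ∀ a ∈ l, 2 ≤ a) {t : ℝ} (ht : 0 ≤ t) (ht1 : t < 1) :
    0 ≤ cfR l t ∧ cfR l t < 1 := by
  cases l with
  | nil => exact ⟨ht, ht1⟩
  | cons a l =>
    have h1 : ∀ x ∈ l, 1 ≤ x := fun x hx => le_trans one_le_two (h x (by simp [hx]))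
    have hnn : 0 ≤ cfR l t := cfR_nonneg l ht
    have ha : (2:ℝ) ≤ (a : ℝ) := by exact_mod_cast h a (by simp)
    constructor
    · exact cfR_nonneg (a :: l) ht
    · show 1 / ((a : ℝ) + cfR l t) < 1
      rw [div_lt_one (by linarith)]
      linarith

lemma gauss_cfR (l : List ℕ) (h : ∀ a ∈ l, 2 ≤ a) {t : ℝ} (ht : 0 ≤ t) (ht1 : t < 1) :
    gaussIter (cfR l t) l.length = t := by
  induction l with
  | nil =>
    show Int.fract t = t
    exact Int.fract_eq_self.mpr ⟨ht, ht1⟩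
  | cons a l ih =>
    have h1 : ∀ x ∈ l, 2 ≤ x := fun x hx => h x (by simp [hx])
    have hmem := cfR_mem_Ico l h1 ht ht1
    have ha : (2:ℝ) ≤ (a : ℝ) := by exact_mod_cast h a (by simp)
    have hxpos : 0 < (a : ℝ) + cfR l t := by linarith [hmem.1]
    have hx : cfR (a :: l) t = 1 / ((a : ℝ) + cfR l t) := rfl
    have hx01 : 0 ≤ cfR (a :: l) t ∧ cfR (a :: l) t < 1 := cfR_mem_Ico (a :: l) h ht ht1
    show gaussIter (cfR (a :: l) t) (l.length + 1) = t
    rw [gaussIter_succ']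
    have hfr : Int.fract (cfR (a :: l) t) = cfR (a :: l) t := Int.fract_eq_self.mpr hx01
    rw [hfr, hx, one_div_one_div]
    have : Int.fract ((a : ℝ) + cfR l t) = cfR l t := by
      rw [add_comm]
      rw [Int.fract_add_natCast]
      exact Int.fract_eq_self.mpr ⟨hmem.1, hmem.2⟩
    rw [this]
    exact ih h1

/-- Solving `η = s / (q (q + q' s))` for `s` below a prescribed bound `u`. -/
lemma solve_lemma {q q' η u : ℝ} (hq : 1 ≤ q) (hq' : 0 ≤ q') (hu : 0 < u) (hη : 0 ≤ η)
    (hlt : η * (q * (q + q' * u)) < u) :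
    ∃ s, 0 ≤ s ∧ s < u ∧ η = s / (q * (q + q' * s)) := by
  have hq0 : 0 < q := by linarith
  have hX : η * q * q' < 1 := by
    by_contra hc
    push_neg at hc
    nlinarith [mul_le_mul_of_nonneg_right hc hu.le, mul_nonneg (mul_nonneg hη hq0.le) hq0.le]
  set s := η * q ^ 2 / (1 - η * q * q') with hs
  have hden : 0 < 1 - η * q * q' := by linarith
  have hs0 : 0 ≤ s := by positivity
  have hkey : q + q' * s = q / (1 - η * q * q') := by
    rw [hs]
    rw [mul_div_assoc', eq_div_iff hden.ne', add_mul, div_mul_cancel₀ _ hden.ne']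
    ring
  have hqs : 0 < q * (q + q' * s) := by
    rw [hkey]
    positivity
  have heq : η = s / (q * (q + q' * s)) := by
    rw [eq_div_iff hqs.ne', hkey, hs, mul_div_assoc', mul_div_assoc',
      div_eq_div_iff (ne_of_gt hden) (ne_of_gt hden)]
    ring
  have hseq : s = η * (q * (q + q' * s)) := (div_eq_iff hqs.ne').mp heq.symm
  refine ⟨s, hs0, ?_, heq⟩
  by_contra hsu
  push_neg at hsu
  have hthis : u * (q * (q + q' * s)) ≤ s * (q * (q + q' * u)) := by nlinarith
  have h1 : η * (q * (q + q' * u)) * (q * (q + q' * s)) < u * (q * (q + q' * s)) :=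
    mul_lt_mul_of_pos_right hlt hqs
  have h2 : s * (q * (q + q' * u)) = η * (q * (q + q' * s)) * (q * (q + q' * u)) := by
    rw [hseq.symm]
  nlinarith [h1, h2, hthis]
lemma cfR_concat (l : List ℕ) (d : ℕ) (x : ℝ) :
    cfR (l ++ [d]) x = cfR l (1 / ((d : ℝ) + x)) := by
  induction l with
  | nil => rfl
  | cons a l ih => simp only [List.cons_append, cfR, List.append_eq, ih]

lemma star_ineq {t w Q Q' q q' : ℝ} (ht0 : 0 < t) (hw0 : 0 ≤ w) (hw1 : w < 1)
    (hq1 : 1 ≤ q) (hq'0 : 0 ≤ q') (hq'q : q' ≤ q) (hQ1 : 1 ≤ Q) (hQ'0 : 0 ≤ Q')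
    (hEc : t * (q * (q + q' * w)) = w * (Q * (Q + Q' * t))) :
    q * (q + q') * t < Q * (Q + Q' * t) := by
  have hQ0 : (0:ℝ) < Q := by linarith
  have hq0 : (0:ℝ) < q := by linarith
  have hDb : (0:ℝ) < Q + Q' * t := by nlinarith [mul_nonneg hQ'0 ht0.le]
  have hR : (0:ℝ) < Q * (Q + Q' * t) := mul_pos hQ0 hDb
  have hA : t * q * q' ≤ t * q * q :=
    mul_le_mul_of_nonneg_left hq'q (mul_nonneg ht0.le hq0.le)
  have hB : t * q * q ≤ w * (Q * (Q + Q' * t)) := by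
    nlinarith [hEc, mul_nonneg (mul_nonneg (mul_nonneg ht0.le hq0.le) hq'0) hw0]
  have hC : t * q * q' < Q * (Q + Q' * t) := by
    nlinarith [mul_lt_mul_of_pos_right hw1 hR]
  nlinarith [mul_pos (sub_pos.mpr hw1) (sub_pos.mpr hC)]

lemma eta_ineq {t Q Q' q q' β : ℝ} (ht0 : 0 < t) (hβ1 : 1 ≤ β) (hβt2 : β * t - 1 ≤ t)
    (hq1 : 1 ≤ q) (hq'0 : 0 ≤ q') (hQ'0 : 0 ≤ Q') (hQ1 : 1 ≤ Q)
    (hstar : q * (q + q') * t < Q * (Q + Q' * t)) :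
    (β * t - 1) * (q * (β * q + q')) < (Q + Q' * t) * (β * Q + Q') := by
  have hq0 : (0:ℝ) < q := lt_of_lt_of_le one_pos hq1
  have hX0 : (0:ℝ) ≤ q * (β * q + q') := by
    have hβq : (0:ℝ) ≤ β * q := mul_nonneg (by linarith) hq0.le
    nlinarith
  have p1 : (β * t - 1) * (q * (β * q + q')) ≤ t * (q * (β * q + q')) :=
    mul_le_mul_of_nonneg_right hβt2 hX0
  have p2 : t * (q * (β * q + q')) ≤ β * (q * (q + q') * t) := by
    nlinarith [mul_nonneg (mul_nonneg (mul_nonneg (sub_nonneg.mpr hβ1) ht0.le) hq0.le) hq'0]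
  have p3 : β * (q * (q + q') * t) < β * (Q * (Q + Q' * t)) :=
    mul_lt_mul_of_pos_left hstar (lt_of_lt_of_le one_pos hβ1)
  have p4 : β * (Q * (Q + Q' * t)) ≤ (Q + Q' * t) * (β * Q + Q') := by
    nlinarith [mul_nonneg hQ'0 (by nlinarith : (0:ℝ) ≤ Q + Q' * t)]
  linarith

lemma theta_ineq {w q1 q1' Q1 Q1' : ℝ} (hw0 : 0 ≤ w) (hw1 : w < 1)
    (hQ11 : 1 ≤ Q1) (hQq : Q1 ≤ q1) (hQ1'0 : 0 ≤ Q1') (hq' : Q1' ≤ q1') :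
    w / (q1 * (q1 + q1' * w)) * (Q1 * (Q1 + Q1' * 1)) < 1 := by
  have hq10 : (0:ℝ) < q1 := lt_of_lt_of_le one_pos (hQ11.trans hQq)
  have hq1'0 : (0:ℝ) ≤ q1' := le_trans hQ1'0 hq'
  have hD : (0:ℝ) < q1 * (q1 + q1' * w) := by
    nlinarith [mul_nonneg hq1'0 hw0]
  rw [div_mul_eq_mul_div, div_lt_one hD]
  have h1 : Q1 * (Q1 + Q1') ≤ q1 * (q1 + q1') := by
    nlinarith [mul_le_mul hQq hQq (by linarith) (by linarith),
      mul_le_mul hQq hq' hQ1'0 (by linarith)]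
  have h2 : w * (Q1 * (Q1 + Q1')) ≤ w * (q1 * (q1 + q1')) := mul_le_mul_of_nonneg_left h1 hw0
  nlinarith [h2, mul_lt_mul_of_pos_right hw1 (mul_pos hq10 hq10)]
set_option maxHeartbeats 1000000 in
/-- The main step of the induction: from the invariant at stage `k` (lists `lb`, `lc`),
construct the data of the invariant at stage `k+1`. -/
lemma step_key (lb lc : List ℕ) (hb1 : ∀ a ∈ lb, 1 ≤ a) (hc1 : ∀ a ∈ lc, 1 ≤ a)
    (hbc : List.Forall₂ (· ≤ ·) lb lc) (hlen : lb.length = lc.length)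
    {α t w : ℝ} (ht0 : 0 < t) (ht1 : t < 1) (hw0 : 0 ≤ w) (hw1 : w < 1)
    (htE : α - cf lc = cfR lb t) (hwE : α - cf lb = cfR lc w)
    (β : ℕ) (hβ : β = ⌊1/t⌋₊ + 1) :
    2 ≤ β ∧ ∃ s, 0 < s ∧ s < 1 ∧ α - cf (lb ++ [β]) = cfR lc s ∧
      ∀ γ : ℕ, γ = ⌊1/s⌋₊ →
        β ≤ γ ∧
        (∃ w₁, 0 ≤ w₁ ∧ w₁ < 1 ∧ α - cf (lb ++ [β]) = cfR (lc ++ [γ]) w₁) ∧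
        (∃ t₁, 0 ≤ t₁ ∧ t₁ < 1 ∧ α - cf (lc ++ [γ]) = cfR (lb ++ [β]) t₁) := by
  -- cast bounds
  have hQ1 : (1:ℝ) ≤ (nC lb : ℝ) := by exact_mod_cast (cnum_bounds lb hb1).1
  have hQ'Q : (nD lb : ℝ) ≤ (nC lb : ℝ) := by exact_mod_cast (cnum_bounds lb hb1).2.1
  have hQ'0 : (0:ℝ) ≤ (nD lb : ℝ) := Nat.cast_nonneg _
  have hq1 : (1:ℝ) ≤ (nC lc : ℝ) := by exact_mod_cast (cnum_bounds lc hc1).1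
  have hq'q : (nD lc : ℝ) ≤ (nC lc : ℝ) := by exact_mod_cast (cnum_bounds lc hc1).2.1
  have hq'0 : (0:ℝ) ≤ (nD lc : ℝ) := Nat.cast_nonneg _
  have hQq : (nC lb : ℝ) ≤ (nC lc : ℝ) := by exact_mod_cast (cnum_mono hbc).2.2.1
  have hQ'q' : (nD lb : ℝ) ≤ (nD lc : ℝ) := by exact_mod_cast (cnum_mono hbc).2.2.2
  have hQ0 : (0:ℝ) < (nC lb : ℝ) := lt_of_lt_of_le one_pos hQ1
  have hq0 : (0:ℝ) < (nC lc : ℝ) := lt_of_lt_of_le one_pos hq1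
  have hDb : (0:ℝ) < (nC lb : ℝ) + (nD lb : ℝ) * t := cfR_denom_pos lb hb1 ht0.le
  have hDc : (0:ℝ) < (nC lc : ℝ) + (nD lc : ℝ) * w := cfR_denom_pos lc hc1 hw0
  have he : ((-1:ℝ) ^ lb.length) * ((-1:ℝ) ^ lb.length) = 1 := by
    rw [← pow_add, ← two_mul, pow_mul]; norm_num
  have he0 : ((-1:ℝ) ^ lb.length) ≠ 0 := pow_ne_zero _ (by norm_num)
  -- position of α relative to cf lb + cf lc, in two ways
  have hρ1 : α - cf lb - cf lc =
      (-1:ℝ) ^ lb.length * t / ((nC lb : ℝ) * ((nC lb : ℝ) + (nD lb : ℝ) * t)) := by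
    have h := cfR_sub_cf lb hb1 ht0.le
    rw [← htE] at h
    linarith only [h]
  have hρ2 : α - cf lb - cf lc =
      (-1:ℝ) ^ lb.length * w / ((nC lc : ℝ) * ((nC lc : ℝ) + (nD lc : ℝ) * w)) := by
    have h := cfR_sub_cf lc hc1 hw0
    rw [← hwE, ← hlen] at h
    linarith only [h]
  have hQpos : (0:ℝ) < (nC lb : ℝ) * ((nC lb : ℝ) + (nD lb : ℝ) * t) := mul_pos hQ0 hDb
  have hqwpos : (0:ℝ) < (nC lc : ℝ) * ((nC lc : ℝ) + (nD lc : ℝ) * w) := mul_pos hq0 hDc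
  have hE' : t / ((nC lb : ℝ) * ((nC lb : ℝ) + (nD lb : ℝ) * t)) =
      w / ((nC lc : ℝ) * ((nC lc : ℝ) + (nD lc : ℝ) * w)) := by
    apply mul_left_cancel₀ he0
    rw [mul_div_assoc', mul_div_assoc', ← hρ1, ← hρ2]
  have hEc : t * ((nC lc : ℝ) * ((nC lc : ℝ) + (nD lc : ℝ) * w)) =
      w * ((nC lb : ℝ) * ((nC lb : ℝ) + (nD lb : ℝ) * t)) := by
    rw [div_eq_div_iff hQpos.ne' hqwpos.ne'] at hE'
    linarith only [hE']
  have hstar := star_ineq ht0 hw0 hw1 hq1 hq'0 hq'q hQ1 hQ'0 hEc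
  -- facts about the new digit β
  have h1t : (0:ℝ) < 1 / t := by positivity
  have hminv : (⌊1/t⌋₊ : ℝ) ≤ 1 / t := Nat.floor_le h1t.le
  have hminv2 : 1 / t < (⌊1/t⌋₊ : ℝ) + 1 := Nat.lt_floor_add_one _
  have hm1 : 1 ≤ ⌊1/t⌋₊ :=
    Nat.le_floor (by rw [Nat.cast_one, le_div_iff₀ ht0, one_mul]; exact ht1.le)
  have hβ2 : 2 ≤ β := by omega
  have hβR : (β : ℝ) = (⌊1/t⌋₊ : ℝ) + 1 := by rw [hβ]; push_cast; ring
  have hβ1R : (1:ℝ) ≤ (β : ℝ) := by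
    rw [hβR]; linarith [Nat.cast_nonneg ⌊1/t⌋₊ (α := ℝ)]
  have hβpos : (0:ℝ) < (β : ℝ) := lt_of_lt_of_le one_pos hβ1R
  have hβt : 1 < (β : ℝ) * t := by
    rw [hβR]
    rw [div_lt_iff₀ ht0] at hminv2
    linarith only [hminv2]
  have hβt2 : (β : ℝ) * t - 1 ≤ t := by
    have h := (le_div_iff₀ ht0).mp hminv
    rw [hβR]
    nlinarith only [h]
  -- the list lb ++ [β]
  have hb'1 : ∀ a ∈ lb ++ [β], 1 ≤ a := by
    intro a ha
    rcases List.mem_append.mp ha with h | h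
    · exact hb1 a h
    · simp at h; omega
  have hconb := cnum_concat lb β
  have hcfb' : cf (lb ++ [β]) =
      ((β : ℝ) * (nA lb : ℝ) + (nB lb : ℝ)) / ((β : ℝ) * (nC lb : ℝ) + (nD lb : ℝ)) := by
    rw [cf_eq _ hb'1, hconb.1, hconb.2.2.1]
    push_cast
    ring
  have hD2 : (0:ℝ) < (β : ℝ) * (nC lb : ℝ) + (nD lb : ℝ) := by nlinarith only [hβ1R, hQ1, hQ'0]
  have hdetb : (nA lb : ℝ) * (nD lb : ℝ) - (nB lb : ℝ) * (nC lb : ℝ) =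
      -(-1:ℝ) ^ lb.length := cnum_det lb
  -- the position η of α - cf (lb ++ [β]) relative to cf lc
  have hAeq : α - cf (lb ++ [β]) - cf lc =
      (-1:ℝ) ^ lb.length * (((β : ℝ) * t - 1) /
        (((nC lb : ℝ) + (nD lb : ℝ) * t) * ((β : ℝ) * (nC lb : ℝ) + (nD lb : ℝ)))) := by
    have h1 : α - cf lc = ((nA lb : ℝ) + (nB lb : ℝ) * t) / ((nC lb : ℝ) + (nD lb : ℝ) * t) := by
      rw [htE, cfR_eq lb hb1 ht0.le]
    have h2 : α - cf (lb ++ [β]) - cf lc =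
        ((nA lb : ℝ) + (nB lb : ℝ) * t) / ((nC lb : ℝ) + (nD lb : ℝ) * t) -
        ((β : ℝ) * (nA lb : ℝ) + (nB lb : ℝ)) / ((β : ℝ) * (nC lb : ℝ) + (nD lb : ℝ)) := by
      rw [← h1, hcfb']; ring
    rw [h2, div_sub_div _ _ hDb.ne' hD2.ne', mul_div_assoc']
    rw [div_eq_div_iff (mul_ne_zero hDb.ne' hD2.ne') (mul_ne_zero hDb.ne' hD2.ne')]
    linear_combination (((nC lb : ℝ) + (nD lb : ℝ) * t) * ((β : ℝ) * (nC lb : ℝ) + (nD lb : ℝ)) *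
      (1 - (β : ℝ) * t)) * hdetb
  have hηpos : 0 < ((β : ℝ) * t - 1) /
      (((nC lb : ℝ) + (nD lb : ℝ) * t) * ((β : ℝ) * (nC lb : ℝ) + (nD lb : ℝ))) :=
    div_pos (by linarith only [hβt]) (mul_pos hDb hD2)
  have hηkey := eta_ineq ht0 hβ1R hβt2 hq1 hq'0 hQ'0 hQ1 hstar
  have hηlt1 : (((β : ℝ) * t - 1) /
      (((nC lb : ℝ) + (nD lb : ℝ) * t) * ((β : ℝ) * (nC lb : ℝ) + (nD lb : ℝ)))) *
      ((nC lc : ℝ) * ((β : ℝ) * (nC lc : ℝ) + (nD lc : ℝ))) < 1 := by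
    rw [div_mul_eq_mul_div, div_lt_one (mul_pos hDb hD2)]
    exact hηkey
  -- solve for s
  have hu : (0:ℝ) < 1 / (β : ℝ) := by positivity
  have hlt : (((β : ℝ) * t - 1) /
      (((nC lb : ℝ) + (nD lb : ℝ) * t) * ((β : ℝ) * (nC lb : ℝ) + (nD lb : ℝ)))) *
      ((nC lc : ℝ) * ((nC lc : ℝ) + (nD lc : ℝ) * (1 / (β : ℝ)))) < 1 / (β : ℝ) := by
    have hr1 : (nC lc : ℝ) * ((nC lc : ℝ) + (nD lc : ℝ) * (1 / (β : ℝ))) =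
        (nC lc : ℝ) * ((β : ℝ) * (nC lc : ℝ) + (nD lc : ℝ)) / (β : ℝ) := by
      rw [eq_div_iff hβpos.ne']
      linear_combination ((nC lc : ℝ) * (nD lc : ℝ)) * (one_div_mul_cancel hβpos.ne')
    rw [hr1, mul_div_assoc']
    rw [div_lt_div_iff_of_pos_right hβpos]
    exact hηlt1
  obtain ⟨s, hs0, hsu, hηs⟩ := solve_lemma hq1 hq'0 hu hηpos.le hlt
  have hspos : 0 < s := by
    rcases lt_or_eq_of_le hs0 with h | h
    · exact h
    · exfalso
      rw [← h] at hηs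
      simp only [mul_zero, add_zero, zero_div] at hηs
      exact hηpos.ne' hηs
  have hs1 : s < 1 := lt_of_lt_of_le hsu (by rw [div_le_one hβpos]; exact hβ1R)
  -- α - cf (lb ++ [β]) = cfR lc s
  have hvs : α - cf (lb ++ [β]) = cfR lc s := by
    have h2 := cfR_sub_cf lc hc1 hs0
    rw [← hlen] at h2
    have h3 : (-1:ℝ) ^ lb.length * s / ((nC lc : ℝ) * ((nC lc : ℝ) + (nD lc : ℝ) * s)) =
        (-1:ℝ) ^ lb.length * (((β : ℝ) * t - 1) /
        (((nC lb : ℝ) + (nD lb : ℝ) * t) * ((β : ℝ) * (nC lb : ℝ) + (nD lb : ℝ)))) := by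
      rw [mul_div_assoc, ← hηs]
    rw [h3] at h2
    linarith only [h2, hAeq]
  refine ⟨hβ2, s, hspos, hs1, hvs, ?_⟩
  intro γ hγ
  -- β ≤ γ
  have hsβ : s * (β : ℝ) < 1 := (lt_div_iff₀ hβpos).mp hsu
  have hγR : (β : ℝ) ≤ 1 / s := by
    rw [le_div_iff₀ hspos]
    nlinarith only [hsβ]
  have hβγ : β ≤ γ := by rw [hγ]; exact Nat.le_floor hγR
  -- the second component of the invariant: w₁ := fract (1/s)
  have h1s0 : (0:ℝ) ≤ 1 / s := by positivity
  have hγfr : (γ : ℝ) + Int.fract (1/s) = 1/s := by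
    rw [hγ, Int.fract, natCast_floor_eq_intCast_floor h1s0]
    ring
  have hw₁0 : 0 ≤ Int.fract (1/s) := Int.fract_nonneg _
  have hw₁1 : Int.fract (1/s) < 1 := Int.fract_lt_one _
  have hsrec : s = 1 / ((γ : ℝ) + Int.fract (1/s)) := by
    rw [hγfr, one_div_one_div]
  have hw1E : α - cf (lb ++ [β]) = cfR (lc ++ [γ]) (Int.fract (1/s)) := by
    rw [cfR_concat, ← hsrec]; exact hvs
  refine ⟨hβγ, ⟨Int.fract (1/s), hw₁0, hw₁1, hw1E⟩, ?_⟩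
  -- the first component of the invariant: t₁
  have hc'1 : ∀ a ∈ lc ++ [γ], 1 ≤ a := by
    intro a ha
    rcases List.mem_append.mp ha with h | h
    · exact hc1 a h
    · simp at h; omega
  have hconc := cnum_concat lc γ
  have hγβR : (β : ℝ) ≤ (γ : ℝ) := by exact_mod_cast hβγ
  have hq1cast : ((nC (lc ++ [γ])) : ℝ) = (γ : ℝ) * (nC lc : ℝ) + (nD lc : ℝ) := by
    rw [hconc.2.2.1]; push_cast; ring
  have hq1'cast : ((nD (lc ++ [γ])) : ℝ) = (nC lc : ℝ) := by rw [hconc.2.2.2]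
  have hQ1cast : ((nC (lb ++ [β])) : ℝ) = (β : ℝ) * (nC lb : ℝ) + (nD lb : ℝ) := by
    rw [hconb.2.2.1]; push_cast; ring
  have hQ1'cast : ((nD (lb ++ [β])) : ℝ) = (nC lb : ℝ) := by rw [hconb.2.2.2]
  have hlenc' : (lc ++ [γ]).length = lb.length + 1 := by simp [hlen]
  have he' : (-1:ℝ) ^ (lb.length + 1) = -((-1:ℝ) ^ lb.length) := by
    rw [pow_succ]; ring
  have h4 := cfR_sub_cf (lc ++ [γ]) hc'1 hw₁0
  rw [hlenc', hq1cast, hq1'cast, he', ← hw1E] at h4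
  have hq1R1 : (1:ℝ) ≤ (γ : ℝ) * (nC lc : ℝ) + (nD lc : ℝ) := by
    nlinarith only [hγβR, hβ1R, hq1, hq'0]
  have hQ11 : (1:ℝ) ≤ (β : ℝ) * (nC lb : ℝ) + (nD lb : ℝ) := by
    nlinarith only [hβ1R, hQ1, hQ'0]
  have hQ1q1 : (β : ℝ) * (nC lb : ℝ) + (nD lb : ℝ) ≤ (γ : ℝ) * (nC lc : ℝ) + (nD lc : ℝ) := by
    have h5 : (β : ℝ) * (nC lb : ℝ) ≤ (γ : ℝ) * (nC lc : ℝ) :=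
      mul_le_mul hγβR hQq hQ0.le (by linarith only [hβ1R, hγβR])
    linarith only [h5, hQ'q']
  have hXpos : (0:ℝ) < (γ : ℝ) * (nC lc : ℝ) + (nD lc : ℝ) := by linarith only [hq1R1]
  have hXwpos : (0:ℝ) < ((γ : ℝ) * (nC lc : ℝ) + (nD lc : ℝ)) *
      (((γ : ℝ) * (nC lc : ℝ) + (nD lc : ℝ)) + (nC lc : ℝ) * Int.fract (1/s)) := by
    have h6 : (0:ℝ) ≤ (nC lc : ℝ) * Int.fract (1/s) := mul_nonneg hq0.le hw₁0
    nlinarith only [hXpos, h6]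
  have hθ0 : (0:ℝ) ≤ Int.fract (1/s) / (((γ : ℝ) * (nC lc : ℝ) + (nD lc : ℝ)) *
      (((γ : ℝ) * (nC lc : ℝ) + (nD lc : ℝ)) + (nC lc : ℝ) * Int.fract (1/s))) :=
    div_nonneg hw₁0 hXwpos.le
  have hθlt := theta_ineq hw₁0 hw₁1 hQ11 hQ1q1 hQ0.le hQq
  obtain ⟨t₁, ht₁0, ht₁u, hθs⟩ := solve_lemma hQ11 hQ0.le one_pos hθ0 hθlt
  have h5 := cfR_sub_cf (lb ++ [β]) hb'1 ht₁0
  rw [show (lb ++ [β]).length = lb.length + 1 by simp, hQ1cast, hQ1'cast, he'] at h5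
  have h6 : -((-1:ℝ) ^ lb.length) * Int.fract (1/s) /
      (((γ : ℝ) * (nC lc : ℝ) + (nD lc : ℝ)) *
        (((γ : ℝ) * (nC lc : ℝ) + (nD lc : ℝ)) + (nC lc : ℝ) * Int.fract (1/s))) =
      -((-1:ℝ) ^ lb.length) * t₁ /
      (((β : ℝ) * (nC lb : ℝ) + (nD lb : ℝ)) *
        (((β : ℝ) * (nC lb : ℝ) + (nD lb : ℝ)) + (nC lb : ℝ) * t₁)) := by
    rw [mul_div_assoc, mul_div_assoc, ← hθs]
  rw [h6] at h4
  exact ⟨t₁, ht₁0, ht₁u, by linarith only [h4, h5]⟩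
lemma pq_succ (x : ℝ) (n : ℕ) : pq x (n + 1) = ⌊1 / gaussIter x n⌋₊ := by
  simp [pq]

lemma length_shulgaList (α : ℝ) (n : ℕ) : (shulgaList α n).length = n := by
  induction n with
  | zero => rfl
  | succ n ih => simp [shulgaList, ih]

lemma shulgaList_succ (α : ℝ) (n : ℕ) :
    shulgaList α (n + 1) = shulgaList α n ++
      [(pq (α - cf (cList α n)) (n + 1) + 1,
        pq (α - cf (bList α n ++ [pq (α - cf (cList α n)) (n + 1) + 1])) (n + 1))] := rfl

lemma bList_succ (α : ℝ) (n : ℕ) :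
    bList α (n + 1) = bList α n ++ [pq (α - cf (cList α n)) (n + 1) + 1] := by
  rw [bList, shulgaList_succ, List.map_append]
  rfl

lemma cList_succ (α : ℝ) (n : ℕ) :
    cList α (n + 1) = cList α n ++
      [pq (α - cf (bList α n ++ [pq (α - cf (cList α n)) (n + 1) + 1])) (n + 1)] := by
  rw [cList, shulgaList_succ, List.map_append]
  rfl

lemma length_bList (α : ℝ) (n : ℕ) : (bList α n).length = n := by
  simp [bList, length_shulgaList]

lemma length_cList (α : ℝ) (n : ℕ) : (cList α n).length = n := by
  simp [cList, length_shulgaList]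

lemma forall₂_map {L : List (ℕ × ℕ)} (h : ∀ p ∈ L, 2 ≤ p.1 ∧ p.1 ≤ p.2) :
    List.Forall₂ (· ≤ ·) (L.map Prod.fst) (L.map Prod.snd) := by
  induction L with
  | nil => simp
  | cons p L ih =>
    simp only [List.map_cons, List.forall₂_cons]
    exact ⟨(h p (by simp)).2, ih fun x hx => h x (by simp [hx])⟩

set_option maxHeartbeats 1600000

/-- The inductive invariant of Shulga's algorithm. -/
def Inv (α : ℝ) (k : ℕ) : Prop :=
  (∀ p ∈ shulgaList α k, 2 ≤ p.1 ∧ p.1 ≤ p.2) ∧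
  (∃ t, 0 ≤ t ∧ t < 1 ∧ α - cf (cList α k) = cfR (bList α k) t) ∧
  (∃ w, 0 ≤ w ∧ w < 1 ∧ α - cf (bList α k) = cfR (cList α k) w)

lemma inv_of (α : ℝ) (n : ℕ) (hn : 0 < n) (hα : α ∈ Set.Icc (0 : ℝ) 1)
    (hdef : shulgaDefined α n) : ∀ k, k ≤ n → Inv α k := by
  intro k
  induction k with
  | zero =>
    intro _
    have h0 := (hdef 0 hn).1
    have hfr : Int.fract α ≠ 0 := by
      simpa [pqDefined, cList, shulgaList, cf, gaussIter] using h0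
    obtain ⟨h01, h11⟩ := hα
    have hα1 : α < 1 := lt_of_le_of_ne h11 (fun h => hfr (by simp [h]))
    refine ⟨by simp [shulgaList], ⟨α, h01, hα1, ?_⟩, ⟨α, h01, hα1, ?_⟩⟩ <;>
      simp [cList, bList, shulgaList, cf, cfR]
  | succ k ih =>
    intro hk1
    have hkn : k < n := Nat.lt_of_lt_of_le (Nat.lt_succ_self k) hk1
    obtain ⟨hL, ⟨t, ht0, ht1, htE⟩, ⟨w, hw0, hw1, hwE⟩⟩ := ih (Nat.le_of_lt hkn)
    obtain ⟨hd1, hd2⟩ := hdef k hkn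
    simp only [pqDefined, Nat.add_sub_cancel] at hd1
    -- basic facts about the digit lists so far
    have hb2 : ∀ a ∈ bList α k, 2 ≤ a := by
      intro a ha
      obtain ⟨p, hp, rfl⟩ := List.mem_map.mp ha
      exact (hL p hp).1
    have hc2 : ∀ a ∈ cList α k, 2 ≤ a := by
      intro a ha
      obtain ⟨p, hp, rfl⟩ := List.mem_map.mp ha
      exact le_trans (hL p hp).1 (hL p hp).2
    have hb1 : ∀ a ∈ bList α k, 1 ≤ a := fun a ha => le_trans one_le_two (hb2 a ha)
    have hc1 : ∀ a ∈ cList α k, 1 ≤ a := fun a ha => le_trans one_le_two (hc2 a ha)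
    have hbc : List.Forall₂ (· ≤ ·) (bList α k) (cList α k) := forall₂_map hL
    have hlenb : (bList α k).length = k := length_bList α k
    have hlenc : (cList α k).length = k := length_cList α k
    -- the Gauss iterate of `α - cf (cList α k)` at time `k` is `t`
    have hgt : gaussIter (α - cf (cList α k)) k = t := by
      rw [htE]
      have h := gauss_cfR (bList α k) hb2 ht0 ht1
      rwa [hlenb] at h
    have ht0' : 0 < t := lt_of_le_of_ne ht0 (fun h => hd1 (by rw [hgt, ← h]))
    -- the new digit β = m + 1
    have hm : pq (α - cf (cList α k)) (k + 1) = ⌊1 / t⌋₊ := by rw [pq_succ, hgt]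
    have h1t : 0 < 1 / t := by positivity
    have hminv : (⌊1 / t⌋₊ : ℝ) ≤ 1 / t := Nat.floor_le h1t.le
    have hminv2 : 1 / t < (⌊1 / t⌋₊ : ℝ) + 1 := Nat.lt_floor_add_one _
    have hm1 : 1 ≤ ⌊1 / t⌋₊ := Nat.le_floor (by
      rw [Nat.cast_one, le_div_iff₀ ht0', one_mul]
      exact ht1.le)
    have hlen : (bList α k).length = (cList α k).length := by rw [hlenb, hlenc]
    obtain ⟨hβ2, s, hspos, hs1, hvs, hrest⟩ :=
      step_key (bList α k) (cList α k) hb1 hc1 hbc hlen ht0' ht1 hw0 hw1 htE hwE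
        (pq (α - cf (cList α k)) (k + 1) + 1) (by rw [hm])
    have hgs : gaussIter (α - cf (bList α k ++ [pq (α - cf (cList α k)) (k + 1) + 1])) k
        = s := by
      rw [hvs]
      have h := gauss_cfR (cList α k) hc2 hspos.le hs1
      rwa [hlenc] at h
    have hγpq : pq (α - cf (bList α k ++ [pq (α - cf (cList α k)) (k + 1) + 1])) (k + 1)
        = ⌊1 / s⌋₊ := by rw [pq_succ, hgs]
    obtain ⟨hβγ, ⟨w₁, hw₁0, hw₁1, hw1E⟩, ⟨t₁, ht₁0, ht₁1, ht1E⟩⟩ := hrest _ hγpq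
    refine ⟨?_, ⟨t₁, ht₁0, ht₁1, ?_⟩, ⟨w₁, hw₁0, hw₁1, ?_⟩⟩
    · intro p hp
      rw [shulgaList_succ] at hp
      rcases List.mem_append.mp hp with h | h
      · exact hL p h
      · simp only [List.mem_singleton] at h
        subst h
        exact ⟨hβ2, hβγ⟩
    · rw [cList_succ, bList_succ]
      exact ht1E
    · rw [cList_succ, bList_succ]
      exact hw1E
/-- for `n ≥ 1`, the Shulga sequences satisfy `cₙ ≥ bₙ`. -/
theorem stmt3 (α : ℝ) (hα : α ∈ Set.Icc (0 : ℝ) 1) (n : ℕ) (hn : 1 ≤ n)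
    (hdef : shulgaDefined α n) : shulgaB α n ≤ shulgaC α n := by
  obtain ⟨k, rfl⟩ : ∃ k, n = k + 1 := ⟨n - 1, by omega⟩
  obtain ⟨hL, -, -⟩ := inv_of α (k + 1) (by omega) hα hdef (k + 1) le_rfl
  have hmem : (pq (α - cf (cList α k)) (k + 1) + 1,
      pq (α - cf (bList α k ++ [pq (α - cf (cList α k)) (k + 1) + 1])) (k + 1)) ∈
      shulgaList α (k + 1) := by
    rw [shulgaList_succ]
    exact List.mem_append_right _ (List.mem_singleton_self _)
  have h := (hL _ hmem).2
  rw [shulgaB, shulgaC, shulgaList_succ, List.getLast?_concat]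
  simpa using h

end ShulgaPaper
end
end

section
/- Let n ≥ 2 and let b_1,…,b_n ≥ 2 and c_1,…,c_n ≥ 1 be integers. If B_n ∩ C_n ∩ C_{n−1} ≠ ∅, then c_n > (1 + [0;c_{n−1},…,c_1]) · (b_n − 1 + [0;b_{n−1},…,b_1]), where [0;c_{n−1},…,c_1] and [0;b_{n−1},…,b_1] are the continued fractions of the reversed sequences. -/
noncomputable section

namespace ShulgaPaper

open Filter Topology

def conv : List ℕ → ℤ × ℤ × ℤ × ℤ
  | [] => (1, 0, 0, 1)
  | a :: l =>
      ((conv l).2.2.1, (conv l).2.2.2,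
        (conv l).1 + (a : ℤ) * (conv l).2.2.1, (conv l).2.1 + (a : ℤ) * (conv l).2.2.2)

lemma conv_nonneg (l : List ℕ) (hl : ∀ a ∈ l, 1 ≤ a) :
    0 ≤ (conv l).1 ∧ 0 ≤ (conv l).2.1 ∧ 0 ≤ (conv l).2.2.1 ∧ 1 ≤ (conv l).2.2.2 := by
  induction l with
  | nil => simp [conv]
  | cons a l ih =>
    have ha : (1 : ℤ) ≤ (a : ℤ) := by exact_mod_cast hl a (List.mem_cons_self)
    obtain ⟨h1, h2, h3, h4⟩ := ih fun x hx => hl x (List.mem_cons_of_mem _ hx)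
    refine ⟨?_, ?_, ?_, ?_⟩ <;> simp [conv] <;> nlinarith

lemma conv_det (l : List ℕ) :
    (conv l).1 * (conv l).2.2.2 - (conv l).2.1 * (conv l).2.2.1 = (-1) ^ l.length := by
  induction l with
  | nil => simp [conv]
  | cons a l ih =>
    simp only [conv, List.length_cons, pow_succ]
    linear_combination (-1 : ℤ) * ih

lemma conv_concat (l : List ℕ) (t : ℕ) :
    conv (l ++ [t]) = ((conv l).2.1, (conv l).1 + (t : ℤ) * (conv l).2.1,
      (conv l).2.2.2, (conv l).2.2.1 + (t : ℤ) * (conv l).2.2.2) := by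
  induction l with
  | nil => simp [conv]
  | cons a l ih =>
    have h : (a :: l) ++ [t] = a :: (l ++ [t]) := rfl
    rw [h]
    show ((conv (l ++ [t])).2.2.1, (conv (l ++ [t])).2.2.2,
        (conv (l ++ [t])).1 + (a:ℤ) * (conv (l ++ [t])).2.2.1,
        (conv (l ++ [t])).2.1 + (a:ℤ) * (conv (l ++ [t])).2.2.2) = _
    rw [ih]
    show _ = ((conv l).2.2.2, (conv l).2.2.1 + (t:ℤ) * (conv l).2.2.2,
        (conv l).2.1 + (a:ℤ) * (conv l).2.2.2,
        ((conv l).1 + (a:ℤ) * (conv l).2.2.1) + (t : ℤ) * ((conv l).2.1 + (a:ℤ) * (conv l).2.2.2))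
    simp only [Prod.mk.injEq]
    exact ⟨trivial, trivial, trivial, by ring⟩

lemma conv_reverse (l : List ℕ) :
    conv l.reverse = ((conv l).1, (conv l).2.2.1, (conv l).2.1, (conv l).2.2.2) := by
  induction l with
  | nil => simp [conv]
  | cons a l ih =>
    rw [List.reverse_cons, conv_concat, ih]
    show _ = ((conv l).2.2.1, (conv l).1 + (a:ℤ) * (conv l).2.2.1,
        (conv l).2.2.2, (conv l).2.1 + (a:ℤ) * (conv l).2.2.2)
    simp only [Prod.mk.injEq]

lemma cf_conv (l : List ℕ) (hl : ∀ a ∈ l, 1 ≤ a) :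
    cf l = ((conv l).2.1 : ℝ) / ((conv l).2.2.2 : ℝ) := by
  induction l with
  | nil => simp [cf, conv]
  | cons a l ih =>
    obtain ⟨h1, h2, h3, h4⟩ := conv_nonneg l fun x hx => hl x (List.mem_cons_of_mem _ hx)
    have ha : 1 ≤ a := hl a (List.mem_cons_self)
    have hD : (0:ℝ) < ((conv l).2.2.2 : ℝ) := by exact_mod_cast lt_of_lt_of_le zero_lt_one h4
    have hB : (0:ℝ) ≤ ((conv l).2.1 : ℝ) := by exact_mod_cast h2
    have haR : (1:ℝ) ≤ (a : ℝ) := by exact_mod_cast ha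
    rw [cf, ih fun x hx => hl x (List.mem_cons_of_mem _ hx)]
    have key : (a:ℝ) + ((conv l).2.1 : ℝ) / ((conv l).2.2.2 : ℝ)
        = (((conv l).2.1 : ℝ) + (a:ℝ) * ((conv l).2.2.2 : ℝ)) / ((conv l).2.2.2 : ℝ) := by
      field_simp; ring
    rw [key, one_div_div]
    simp only [conv]
    push_cast
    ring

lemma cf_concat (l : List ℕ) (hl : ∀ a ∈ l, 1 ≤ a) (t : ℕ) (ht : 1 ≤ t) :
    cf (l ++ [t]) = (((conv l).1 : ℝ) + ((conv l).2.1 : ℝ) * (t : ℝ)) /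
      (((conv l).2.2.1 : ℝ) + ((conv l).2.2.2 : ℝ) * (t : ℝ)) := by
  induction l with
  | nil => simp [cf, conv]
  | cons a l ih =>
    obtain ⟨h1, h2, h3, h4⟩ := conv_nonneg l fun x hx => hl x (List.mem_cons_of_mem _ hx)
    have ha : 1 ≤ a := hl a (List.mem_cons_self)
    have hD : (0:ℝ) < ((conv l).2.2.2 : ℝ) := by exact_mod_cast lt_of_lt_of_le zero_lt_one h4
    have hC : (0:ℝ) ≤ ((conv l).2.2.1 : ℝ) := by exact_mod_cast h3
    have hA : (0:ℝ) ≤ ((conv l).1 : ℝ) := by exact_mod_cast h1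
    have hB : (0:ℝ) ≤ ((conv l).2.1 : ℝ) := by exact_mod_cast h2
    have haR : (1:ℝ) ≤ (a : ℝ) := by exact_mod_cast ha
    have htR : (1:ℝ) ≤ (t : ℝ) := by exact_mod_cast ht
    have h : (a :: l) ++ [t] = a :: (l ++ [t]) := rfl
    rw [h, cf, ih fun x hx => hl x (List.mem_cons_of_mem _ hx)]
    have hden : (0:ℝ) < ((conv l).2.2.1 : ℝ) + ((conv l).2.2.2 : ℝ) * (t : ℝ) := by nlinarith
    have hden2 : (0:ℝ) < ((conv l).2.1 : ℝ) + ((conv l).2.2.2 : ℝ) * (a : ℝ) := by nlinarith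
    simp only [conv]
    push_cast
    rw [div_eq_div_iff (by positivity) (by nlinarith)]
    field_simp
    ring
lemma length_listOf (a : ℕ → ℕ) (k : ℕ) : (listOf a k).length = k := by simp [listOf]

lemma listOf_succ (a : ℕ → ℕ) (k : ℕ) : listOf a (k + 1) = listOf a k ++ [a (k + 1)] := by
  simp [listOf, List.range_succ]

lemma mem_listOf {a : ℕ → ℕ} {k x : ℕ} (h : x ∈ listOf a k) :
    ∃ i, 1 ≤ i ∧ i ≤ k ∧ x = a i := by
  simp only [listOf, List.mem_map, List.mem_range] at h
  obtain ⟨i, hik, rfl⟩ := h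
  exact ⟨i + 1, by omega, by omega, rfl⟩

lemma hIco_le {x u v : ℝ} (h : u ≤ v) (hx : x ∈ hIco u v) : u ≤ x ∧ x < v := by
  rw [hIco, if_pos h] at hx; exact ⟨hx.1, hx.2⟩

lemma hIco_gt {x u v : ℝ} (h : v < u) (hx : x ∈ hIco u v) : v < x ∧ x ≤ u := by
  rw [hIco, if_neg (not_le.mpr h)] at hx; exact ⟨hx.1, hx.2⟩

lemma frac_split {p1 p2 p3 p4 t eps : ℝ} (hdet : p1 * p4 - p2 * p3 = eps)
    (h4 : 0 < p4) (hden : 0 < p3 + p4 * t) :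
    (p1 + p2 * t) / (p3 + p4 * t) = p2 / p4 + eps / (p4 * (p3 + p4 * t)) := by
  rw [div_add_div _ _ (ne_of_gt h4) (by positivity), div_eq_div_iff (ne_of_gt hden) (by positivity)]
  linear_combination (p4 * (p3 + p4 * t)) * hdet

set_option maxHeartbeats 1000000 in
lemma core (ε d3 d4 f3 f4 Bn C2 γ β x : ℝ)
    (hε : ε = 1 ∨ ε = -1)
    (hd4 : 1 ≤ d4) (hd3 : 0 ≤ d3) (hf4 : 1 ≤ f4) (hf3 : 0 ≤ f3)
    (hB : 2 ≤ Bn) (hC2 : 1 ≤ C2)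
    (h1 : x ∈ hIco (β + ε / (d4 * (d3 + d4 * (Bn - 1))) + γ)
                   (β + ε / (d4 * (d3 + d4 * Bn)) + γ))
    (h2 : x ∈ hIco (γ + ε / (f4 * (f3 + f4 * C2)) + (β + ε / (d4 * (d3 + d4 * Bn))))
                   (γ + ε / (f4 * (f3 + f4 * (C2 + 1))) + (β + ε / (d4 * (d3 + d4 * Bn)))))
    (h3 : x ∈ hIco (γ + β) (γ + ε / (f4 * (f3 + f4)) + β)) :
    (f4 + f3) * (d4 * (Bn - 1) + d3) < C2 * (f4 * d4) := by
  have hd40 : 0 < d4 := by linarith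
  have hf40 : 0 < f4 := by linarith
  have hQ' : 0 < d3 + d4 * (Bn - 1) := by nlinarith
  have hQB : 0 < d3 + d4 * Bn := by nlinarith
  have hBB1 : 0 < d4 * (d3 + d4 * (Bn - 1)) := by positivity
  have hBB2 : 0 < d4 * (d3 + d4 * Bn) := by positivity
  have hB12 : d4 * (d3 + d4 * (Bn - 1)) < d4 * (d3 + d4 * Bn) := by nlinarith
  have hs0 : 0 < f3 + f4 := by linarith
  have hsC : 0 < f3 + f4 * C2 := by nlinarith
  have hsC1 : 0 < f3 + f4 * (C2 + 1) := by nlinarith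
  have hA1 : 0 < f4 * (f3 + f4) := by positivity
  have hA2 : 0 < f4 * (f3 + f4 * (C2 + 1)) := by positivity
  have hA02 : 0 < f4 * (f3 + f4 * C2) := by positivity
  have hA12 : f4 * (f3 + f4 * C2) < f4 * (f3 + f4 * (C2 + 1)) := by nlinarith
  have I12 : 1 / (f4 * (f3 + f4 * (C2 + 1))) + 1 / (d4 * (d3 + d4 * Bn)) < 1 / (f4 * (f3 + f4)) ∧
      1 / (f4 * (f3 + f4 * (C2 + 1))) + 1 / (d4 * (d3 + d4 * Bn)) <
        1 / (d4 * (d3 + d4 * (Bn - 1))) := by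
    have hrecB := one_div_lt_one_div_of_lt hBB1 hB12
    have hrecA := one_div_lt_one_div_of_lt hA02 hA12
    have hposA1 := one_div_pos.mpr hA1
    rcases hε with rfl | rfl
    · have o1 : (β + 1 / (d4 * (d3 + d4 * Bn)) + γ) < (β + 1 / (d4 * (d3 + d4 * (Bn - 1))) + γ) := by
        linarith
      obtain ⟨-, hx1⟩ := hIco_gt o1 h1
      have o2 : (γ + 1 / (f4 * (f3 + f4 * (C2 + 1))) + (β + 1 / (d4 * (d3 + d4 * Bn)))) <
          (γ + 1 / (f4 * (f3 + f4 * C2)) + (β + 1 / (d4 * (d3 + d4 * Bn)))) := by linarith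
      obtain ⟨hx2, -⟩ := hIco_gt o2 h2
      have o3 : (γ + β) ≤ γ + 1 / (f4 * (f3 + f4)) + β := by linarith
      obtain ⟨-, hx3⟩ := hIco_le o3 h3
      constructor <;> linarith
    · simp only [neg_div] at h1 h2 h3
      have o1 : (β + -(1 / (d4 * (d3 + d4 * (Bn - 1)))) + γ) ≤
          (β + -(1 / (d4 * (d3 + d4 * Bn))) + γ) := by linarith
      obtain ⟨hx1, -⟩ := hIco_le o1 h1
      have o2 : (γ + -(1 / (f4 * (f3 + f4 * C2))) + (β + -(1 / (d4 * (d3 + d4 * Bn))))) ≤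
          (γ + -(1 / (f4 * (f3 + f4 * (C2 + 1)))) + (β + -(1 / (d4 * (d3 + d4 * Bn))))) := by
        linarith
      obtain ⟨-, hx2⟩ := hIco_le o2 h2
      have o3 : (γ + -(1 / (f4 * (f3 + f4))) + β) < γ + β := by linarith
      obtain ⟨hx3, -⟩ := hIco_gt o3 h3
      constructor <;> linarith
  obtain ⟨I1, I2⟩ := I12
  rw [div_add_div _ _ (ne_of_gt hA2) (ne_of_gt hBB2)] at I1 I2
  rw [div_lt_div_iff₀ (by positivity) hA1] at I1
  rw [div_lt_div_iff₀ (by positivity) hBB1] at I2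
  have hf4sq : 0 < f4 ^ 2 := by positivity
  have hd4sq : 0 < d4 ^ 2 := by positivity
  have J1 : (f3 + f4) * (f3 + f4 * (C2 + 1)) < C2 * (d4 * (d3 + d4 * Bn)) := by
    have key : f4 ^ 2 * (C2 * (d4 * (d3 + d4 * Bn)) - (f3 + f4) * (f3 + f4 * (C2 + 1))) =
        1 * (f4 * (f3 + f4 * (C2 + 1)) * (d4 * (d3 + d4 * Bn))) -
          (1 * (d4 * (d3 + d4 * Bn)) + 1 * (f4 * (f3 + f4 * (C2 + 1)))) * (f4 * (f3 + f4)) := by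
      ring
    nlinarith [key, I1, hf4sq]
  have J2 : (d3 + d4 * (Bn - 1)) * (d3 + d4 * Bn) < f4 * (f3 + f4 * (C2 + 1)) := by
    have key : d4 ^ 2 * (f4 * (f3 + f4 * (C2 + 1)) - (d3 + d4 * (Bn - 1)) * (d3 + d4 * Bn)) =
        1 * (f4 * (f3 + f4 * (C2 + 1)) * (d4 * (d3 + d4 * Bn))) -
          (1 * (d4 * (d3 + d4 * Bn)) + 1 * (f4 * (f3 + f4 * (C2 + 1)))) *
            (d4 * (d3 + d4 * (Bn - 1))) := by
      ring
    nlinarith [key, I2, hd4sq]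
  nlinarith [mul_lt_mul_of_pos_left J2 hs0, mul_lt_mul_of_pos_left J1 hf40, hQB]
-- MAIN

lemma cf_reverse (l : List ℕ) (hl : ∀ a ∈ l, 1 ≤ a) :
    cf l.reverse = ((conv l).2.2.1 : ℝ) / ((conv l).2.2.2 : ℝ) := by
  rw [cf_conv _ fun a ha => hl a (List.mem_reverse.mp ha), conv_reverse]


set_option maxHeartbeats 2000000 in
/-- if `Bₙ ∩ Cₙ ∩ C_{n−1} ≠ ∅` then
`cₙ > (1 + [0;c_{n−1},…,c₁])(bₙ − 1 + [0;b_{n−1},…,b₁])`. -/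
theorem stmt14 (n : ℕ) (hn : 2 ≤ n) (b c : ℕ → ℕ)
    (hb : ∀ k : ℕ, 1 ≤ k → k ≤ n → 2 ≤ b k) (hc : ∀ k : ℕ, 1 ≤ k → k ≤ n → 1 ≤ c k)
    (h : (Bset b c n ∩ Cset b c n ∩ Cset b c (n - 1)).Nonempty) :
    (c n : ℝ) > (1 + cf (listOf c (n - 1)).reverse) *
      ((b n : ℝ) - 1 + cf (listOf b (n - 1)).reverse) := by
  obtain ⟨m, rfl⟩ : ∃ m, n = m + 2 := ⟨n - 2, by omega⟩
  obtain ⟨x, ⟨hx1, hx2⟩, hx3⟩ := h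
  simp only [Bset, Cset, show m + 2 - 1 = m + 1 from rfl, show m + 1 - 1 = m from rfl]
    at hx1 hx2 hx3 ⊢
  -- digit bounds
  have hbm : ∀ a ∈ listOf b (m+1), 1 ≤ a := by
    intro a ha; obtain ⟨i, h1, h2, rfl⟩ := mem_listOf ha
    have := hb i h1 (by omega); omega
  have hcm1 : ∀ a ∈ listOf c (m+1), 1 ≤ a := by
    intro a ha; obtain ⟨i, h1, h2, rfl⟩ := mem_listOf ha
    exact hc i h1 (by omega)
  have hcm : ∀ a ∈ listOf c m, 1 ≤ a := by
    intro a ha; obtain ⟨i, h1, h2, rfl⟩ := mem_listOf ha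
    exact hc i h1 (by omega)
  have hbn2 : 2 ≤ b (m+2) := hb (m+2) (by omega) (by omega)
  have hcn1 : 1 ≤ c (m+2) := hc (m+2) (by omega) (by omega)
  -- convergent tuples
  rcases hdq : conv (listOf b (m+1)) with ⟨d1, d2, d3, d4⟩
  rcases hfq : conv (listOf c (m+1)) with ⟨f1, f2, f3, f4⟩
  rcases heq : conv (listOf c m) with ⟨e1, e2, e3, e4⟩
  have hdnn := conv_nonneg (listOf b (m+1)) hbm
  rw [hdq] at hdnn; dsimp only at hdnn
  have hfnn := conv_nonneg (listOf c (m+1)) hcm1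
  rw [hfq] at hfnn; dsimp only at hfnn
  -- determinants
  have hdetd : d1 * d4 - d2 * d3 = (-1:ℤ)^(m+1) := by
    have h := conv_det (listOf b (m+1)); rw [hdq, length_listOf] at h; exact h
  have hdetf : f1 * f4 - f2 * f3 = (-1:ℤ)^(m+1) := by
    have h := conv_det (listOf c (m+1)); rw [hfq, length_listOf] at h; exact h
  set ε : ℝ := ((-1 : ℝ))^(m+1) with hεdef
  have hε1 : ε = 1 ∨ ε = -1 := by
    rcases Nat.even_or_odd (m+1) with hmm | hmm
    · left; rw [hεdef]; exact Even.neg_one_pow hmm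
    · right; rw [hεdef]; exact Odd.neg_one_pow hmm
  have hdetdR : (d1:ℝ) * (d4:ℝ) - (d2:ℝ) * (d3:ℝ) = ε := by rw [hεdef]; exact_mod_cast hdetd
  have hdetfR : (f1:ℝ) * (f4:ℝ) - (f2:ℝ) * (f3:ℝ) = ε := by rw [hεdef]; exact_mod_cast hdetf
  -- f-tuple in terms of e-tuple
  have hcc : (f1, f2, f3, f4) = (e2, e1 + (c (m+1):ℤ) * e2, e4, e3 + (c (m+1):ℤ) * e4) := by
    rw [← hfq, listOf_succ c m, conv_concat, heq]
  simp only [Prod.mk.injEq] at hcc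
  obtain ⟨hfe1, hfe2, hfe3, hfe4⟩ := hcc
  have hfe1R : (f1:ℝ) = e2 := by exact_mod_cast hfe1
  have hfe2R : (f2:ℝ) = (e1:ℝ) + (c (m+1):ℝ) * (e2:ℝ) := by exact_mod_cast hfe2
  have hfe3R : (f3:ℝ) = e4 := by exact_mod_cast hfe3
  have hfe4R : (f4:ℝ) = (e3:ℝ) + (c (m+1):ℝ) * (e4:ℝ) := by exact_mod_cast hfe4
  -- real positivity facts
  have hd2R : (0:ℝ) ≤ d2 := by exact_mod_cast hdnn.2.1
  have hd3R : (0:ℝ) ≤ d3 := by exact_mod_cast hdnn.2.2.1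
  have hd4R : (1:ℝ) ≤ d4 := by exact_mod_cast hdnn.2.2.2
  have hf3R : (0:ℝ) ≤ f3 := by exact_mod_cast hfnn.2.2.1
  have hf4R : (1:ℝ) ≤ f4 := by exact_mod_cast hfnn.2.2.2
  have hBR : (2:ℝ) ≤ (b (m+2):ℝ) := by exact_mod_cast hbn2
  have hC2R : (1:ℝ) ≤ (c (m+2):ℝ) := by exact_mod_cast hcn1
  have hd4pos : (0:ℝ) < d4 := by linarith
  have hf4pos : (0:ℝ) < f4 := by linarith
  have hQ'pos : (0:ℝ) < (d3:ℝ) + (d4:ℝ) * ((b (m+2):ℝ) - 1) := by nlinarith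
  have hQBpos : (0:ℝ) < (d3:ℝ) + (d4:ℝ) * (b (m+2):ℝ) := by nlinarith
  have hsCpos : (0:ℝ) < (f3:ℝ) + (f4:ℝ) * (c (m+2):ℝ) := by nlinarith
  have hsC1pos : (0:ℝ) < (f3:ℝ) + (f4:ℝ) * ((c (m+2):ℝ) + 1) := by nlinarith
  have hsfpos : (0:ℝ) < (f3:ℝ) + (f4:ℝ) * 1 := by nlinarith
  -- cf values
  have hcfb : cf (listOf b (m+1)) = (d2:ℝ) / (d4:ℝ) := by rw [cf_conv _ hbm, hdq]
  have hcfc : cf (listOf c (m+1)) = (f2:ℝ) / (f4:ℝ) := by rw [cf_conv _ hcm1, hfq]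
  -- endpoint formulas
  have hE1 : cf (listOf b (m+1) ++ [b (m+2)]) =
      (d2:ℝ)/(d4:ℝ) + ε / ((d4:ℝ) * ((d3:ℝ) + (d4:ℝ) * (b (m+2):ℝ))) := by
    rw [cf_concat _ hbm _ (by omega), hdq]
    exact frac_split hdetdR hd4pos hQBpos
  have hE1' : cf (listOf b (m+1) ++ [b (m+2) - 1]) =
      (d2:ℝ)/(d4:ℝ) + ε / ((d4:ℝ) * ((d3:ℝ) + (d4:ℝ) * ((b (m+2):ℝ) - 1))) := by
    rw [cf_concat _ hbm (b (m+2) - 1) (by omega), hdq]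
    dsimp only
    rw [Nat.cast_sub (by omega : 1 ≤ b (m+2)), Nat.cast_one]
    exact frac_split hdetdR hd4pos hQ'pos
  have hE3 : cf (listOf c (m+1) ++ [c (m+2)]) =
      (f2:ℝ)/(f4:ℝ) + ε / ((f4:ℝ) * ((f3:ℝ) + (f4:ℝ) * (c (m+2):ℝ))) := by
    rw [cf_concat _ hcm1 _ (by omega), hfq]
    exact frac_split hdetfR hf4pos hsCpos
  have hE4 : cf (listOf c (m+1) ++ [c (m+2) + 1]) =
      (f2:ℝ)/(f4:ℝ) + ε / ((f4:ℝ) * ((f3:ℝ) + (f4:ℝ) * ((c (m+2):ℝ) + 1))) := by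
    rw [cf_concat _ hcm1 _ (by omega), hfq]
    dsimp only
    rw [Nat.cast_add, Nat.cast_one]
    exact frac_split hdetfR hf4pos hsC1pos
  have hE5 : cf (listOf c m ++ [c (m+1) + 1]) =
      (f2:ℝ)/(f4:ℝ) + ε / ((f4:ℝ) * ((f3:ℝ) + (f4:ℝ))) := by
    rw [cf_concat _ hcm _ (by omega), heq]
    dsimp only
    rw [Nat.cast_add, Nat.cast_one]
    have hnum : (e1:ℝ) + (e2:ℝ) * ((c (m+1):ℝ) + 1) = (f1:ℝ) + (f2:ℝ) * 1 := by
      rw [hfe1R, hfe2R]; ring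
    have hden : (e3:ℝ) + (e4:ℝ) * ((c (m+1):ℝ) + 1) = (f3:ℝ) + (f4:ℝ) * 1 := by
      rw [hfe3R, hfe4R]; ring
    rw [hnum, hden, frac_split hdetfR hf4pos hsfpos]
    rw [mul_one]
  -- rewrite memberships
  have hsb2 : listOf b (m+2) = listOf b (m+1) ++ [b (m+2)] := listOf_succ b (m+1)
  have hsc2 : listOf c (m+2) = listOf c (m+1) ++ [c (m+2)] := listOf_succ c (m+1)
  rw [hsb2, hE1', hE1, hcfc] at hx1
  rw [hsb2, hsc2, hE3, hE4, hE1] at hx2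
  rw [hE5, hcfc, hcfb] at hx3
  -- final goal
  rw [cf_reverse _ hcm1, cf_reverse _ hbm, hdq, hfq]
  dsimp only
  have main := core ε (d3:ℝ) (d4:ℝ) (f3:ℝ) (f4:ℝ) ((b (m+2):ℕ):ℝ) ((c (m+2):ℕ):ℝ)
      ((f2:ℝ)/(f4:ℝ)) ((d2:ℝ)/(d4:ℝ)) x hε1 hd4R hd3R hf4R hf3R hBR hC2R hx1 hx2 hx3
  rw [gt_iff_lt]
  have hf4ne : (f4:ℝ) ≠ 0 := ne_of_gt hf4pos
  have hd4ne : (d4:ℝ) ≠ 0 := ne_of_gt hd4pos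
  have hrw : (1 + (f3:ℝ)/(f4:ℝ)) * ((b (m+2):ℝ) - 1 + (d3:ℝ)/(d4:ℝ))
      = (((f4:ℝ) + (f3:ℝ)) * ((d4:ℝ) * ((b (m+2):ℝ) - 1) + (d3:ℝ))) / ((f4:ℝ) * (d4:ℝ)) := by
    rw [eq_div_iff (by positivity)]; field_simp
  rw [hrw, div_lt_iff₀ (by positivity)]
  linarith [main]

end ShulgaPaper
end
end
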